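/- Let p > 1, C₀ > 0, R₁ > 1, set κ = 1/(p−1), and let η, ψ_R, ψ*_R, P(R) be as in the context, with p' = p/(p-1). There exist constants C > 0 and δ₀ ∈ (0,1), depending only on p, C₀, R₁ and η, with the following property: if δ ∈ (0,δ₀], T > R₁, and w : Ω × [0,T) → [0,∞) is measurable, integrable on P(R) for every R ∈ (0,T), and satisfies δ + ∬_{P(R)} w(x,t) ψ_R(x,t) dx dt ≤ C₀ (log R)^{κ/p'} ( ∬_{P(R)} w(x,t) ψ*_R(x,t) dx dt )^{1/p} for every R ∈ [R₁,T), then T ≤ exp( exp( C δ^{−(p−1)} ) ). -/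

import Mathlib

open MeasureTheory Real Set

noncomputable section

/-- The plane `ℝ²` with the Euclidean norm. -/
abbrev E2 := EuclideanSpace ℝ (Fin 2)

/-- The exterior domain `Ω = {x ∈ ℝ² : |x| > 1}`. -/
def Omega : Set E2 := {x : E2 | 1 < ‖x‖}

/-- `η` is of class `C²` on `[0,∞)`, equals `1` on `[0,1/2]`, is nonincreasing on `[1/2,1]`
and vanishes on `[1,∞)`. -/
def etaOK (η : ℝ → ℝ) : Prop :=
  ContDiffOn ℝ 2 η (Set.Ici 0) ∧
  (∀ s ∈ Set.Icc (0 : ℝ) (1 / 2), η s = 1) ∧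
  AntitoneOn η (Set.Icc (1 / 2 : ℝ) 1) ∧
  (∀ s : ℝ, 1 ≤ s → η s = 0)

/-- `η*(s) = 0` for `s < 1/2` and `η*(s) = η(s)` for `s ≥ 1/2`. -/
def etaStar (η : ℝ → ℝ) (s : ℝ) : ℝ := if s < 1 / 2 then 0 else η s

/-- `ψ_R(x,t) = [η(((|x|-1)² + t)/R)]^{2p'}` with `p' = p/(p-1)`. -/
def psi (η : ℝ → ℝ) (p R : ℝ) (x : E2) (t : ℝ) : ℝ :=
  η (((‖x‖ - 1) ^ 2 + t) / R) ^ (2 * (p / (p - 1)))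

/-- `ψ*_R(x,t) = [η*(((|x|-1)² + t)/R)]^{2p'}` with `p' = p/(p-1)`. -/
def psiStar (η : ℝ → ℝ) (p R : ℝ) (x : E2) (t : ℝ) : ℝ :=
  etaStar η (((‖x‖ - 1) ^ 2 + t) / R) ^ (2 * (p / (p - 1)))

/-- `P(R) = {(x,t) ∈ Ω × [0,∞) : (|x|-1)² + t ≤ R}`. -/
def Pset (R : ℝ) : Set (E2 × ℝ) :=
  {q : E2 × ℝ | q.1 ∈ Omega ∧ 0 ≤ q.2 ∧ (‖q.1‖ - 1) ^ 2 + q.2 ≤ R}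

/-- The Laplacian in the `x`-variables: the sum of the two second partial derivatives. -/
def lapx {F : Type*} [NormedAddCommGroup F] [NormedSpace ℝ F] (f : E2 → F) (x : E2) : F :=
  ∑ i : Fin 2, iteratedDeriv 2 (fun s : ℝ => f (x + s • EuclideanSpace.single i (1 : ℝ))) 0

/-! ### Auxiliary lemmas -/

lemma key_ineq (β z ζ : ℝ) (hβ : 0 < β) (hz : 0 < z) (hzζ : z ≤ ζ) :
    β * (ζ - z) * ζ ^ (-β - 1) ≤ z ^ (-β) - ζ ^ (-β) := by
  have hζ : 0 < ζ := hz.trans_le hzζ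
  set r : ℝ := z / ζ with hrdef
  have hr0 : 0 < r := div_pos hz hζ
  have hr1 : r ≤ 1 := (div_le_one hζ).mpr hzζ
  have hlog : Real.log r ≤ r - 1 := Real.log_le_sub_one_of_pos hr0
  have hexp : Real.log r * (-β) + 1 ≤ r ^ (-β) := by
    rw [Real.rpow_def_of_pos hr0]
    exact Real.add_one_le_exp _
  have hkey : 1 + β * (1 - r) ≤ r ^ (-β) := by nlinarith
  have hzr : z = r * ζ := by rw [hrdef, div_mul_cancel₀ z hζ.ne']
  have hzrp : z ^ (-β) = r ^ (-β) * ζ ^ (-β) := by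
    rw [hzr, Real.mul_rpow hr0.le hζ.le]
  have hζβ : (0:ℝ) < ζ ^ (-β) := Real.rpow_pos_of_pos hζ _
  have hsplit : ζ ^ (-β - 1) = ζ ^ (-β) * ζ⁻¹ := by
    rw [show -β - 1 = -β + (-1) by ring, Real.rpow_add hζ, Real.rpow_neg_one]
  have h1r : ζ - z = (1 - r) * ζ := by rw [hzr]; ring
  rw [hzrp, hsplit, h1r]
  have : β * ((1 - r) * ζ) * (ζ ^ (-β) * ζ⁻¹) = (β * (1 - r)) * ζ ^ (-β) := by
    field_simp
  rw [this]
  nlinarith [mul_le_mul_of_nonneg_right hkey hζβ.le]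

lemma harmonic_lower (N : ℕ) :
    Real.log (N + 1) ≤ ∑ k ∈ Finset.range N, (1:ℝ) / (k + 1) := by
  induction N with
  | zero => simp
  | succ n ih =>
    rw [Finset.sum_range_succ]
    have h1 : (0:ℝ) < n + 1 := by positivity
    have h2 : (0:ℝ) < n + 2 := by positivity
    have : Real.log ((n:ℝ) + 1 + 1) - Real.log ((n:ℝ) + 1) ≤ 1 / (n + 1) := by
      rw [← Real.log_div (by positivity) (by positivity)]
      have := Real.log_le_sub_one_of_pos (x := ((n:ℝ) + 1 + 1) / ((n:ℝ) + 1)) (by positivity)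
      have heq : ((n:ℝ) + 1 + 1) / ((n:ℝ) + 1) - 1 = 1 / (n + 1) := by field_simp; ring
      linarith
    push_cast
    linarith

section eta
variable {η : ℝ → ℝ}

lemma eta_nonneg (hη : etaOK η) {s : ℝ} (hs : 0 ≤ s) : 0 ≤ η s := by
  obtain ⟨-, h1, hmono, h0⟩ := hη
  rcases le_or_gt s (1/2) with h | h
  · rw [h1 s ⟨hs, h⟩]; norm_num
  rcases le_or_gt s 1 with h' | h'
  · have := hmono ⟨h.le, h'⟩ ⟨by norm_num, le_refl (1:ℝ)⟩ h'
    rw [h0 1 le_rfl] at this; linarith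
  · rw [h0 s h'.le]

lemma eta_le_one (hη : etaOK η) {s : ℝ} (hs : 0 ≤ s) : η s ≤ 1 := by
  obtain ⟨-, h1, hmono, h0⟩ := hη
  rcases le_or_gt s (1/2) with h | h
  · rw [h1 s ⟨hs, h⟩]
  rcases le_or_gt s 1 with h' | h'
  · have := hmono ⟨le_refl (1/2:ℝ), by norm_num⟩ ⟨h.le, h'⟩ h.le
    rw [h1 (1/2) ⟨by norm_num, le_refl _⟩] at this; linarith
  · rw [h0 s h'.le]; norm_num

lemma eta_antitone (hη : etaOK η) : AntitoneOn η (Set.Ici 0) := by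
  intro s hs t ht hst
  obtain ⟨hc, h1, hmono, h0⟩ := hη
  simp only [Set.mem_Ici] at hs ht
  rcases le_or_gt t (1/2) with h | h
  · rw [h1 s ⟨hs, hst.trans h⟩, h1 t ⟨ht, h⟩]
  rcases le_or_gt s (1/2) with h2 | h2
  · rw [h1 s ⟨hs, h2⟩]; exact eta_le_one ⟨hc, h1, hmono, h0⟩ ht
  rcases le_or_gt t 1 with h3 | h3
  · exact hmono ⟨h2.le, hst.trans h3⟩ ⟨h.le, h3⟩ hst
  · rw [h0 t h3.le]; exact eta_nonneg ⟨hc, h1, hmono, h0⟩ hs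

lemma etaStar_nonneg (hη : etaOK η) {s : ℝ} (hs : 0 ≤ s) : 0 ≤ etaStar η s := by
  rw [etaStar]
  split_ifs with h
  · exact le_refl 0
  · exact eta_nonneg hη hs

lemma etaStar_le_eta (hη : etaOK η) {s : ℝ} (hs : 0 ≤ s) : etaStar η s ≤ η s := by
  rw [etaStar]
  split_ifs with h
  · exact eta_nonneg hη hs
  · exact le_refl _

end eta

set_option maxHeartbeats 2000000 in
/-- Key lemma, critical case `θ = 0`, `κ = 1/(p−1)`: under the criterion
`δ + ∬_{P(R)} w ψ_R ≤ C₀ (log R)^{κ/p'} (∬_{P(R)} w ψ*_R)^{1/p}` for all `R ∈ [R₁,T)`,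
one gets `T ≤ exp(exp(C δ^{−(p−1)}))`. -/
theorem statement11 (p C₀ R₁ : ℝ) (hp : 1 < p) (hC₀ : 0 < C₀)
    (hR₁ : 1 < R₁) (η : ℝ → ℝ) (hη : etaOK η) :
    ∃ C > (0 : ℝ), ∃ δ₀ ∈ Set.Ioo (0 : ℝ) 1,
      ∀ δ : ℝ, 0 < δ → δ ≤ δ₀ → ∀ T : ℝ, R₁ < T →
      ∀ w : E2 → ℝ → ℝ,
        Measurable (fun q : E2 × ℝ => w q.1 q.2) →
        (∀ x : E2, ∀ t : ℝ, x ∈ Omega → 0 ≤ t → t < T → 0 ≤ w x t) →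
        (∀ R ∈ Set.Ioo (0 : ℝ) T,
          IntegrableOn (fun q : E2 × ℝ => w q.1 q.2) (Pset R)) →
        (∀ R : ℝ, R₁ ≤ R → R < T →
          δ + ∫ q in Pset R, w q.1 q.2 * psi η p R q.1 q.2
            ≤ C₀ * Real.log R ^ ((1 / (p - 1)) / (p / (p - 1))) *
              (∫ q in Pset R, w q.1 q.2 * psiStar η p R q.1 q.2) ^ (1 / p)) →
        T ≤ Real.exp (Real.exp (C * δ ^ (-(p - 1)))) := by
  classical
  have hp0 : (0:ℝ) < p := by linarith
  have hp1 : (0:ℝ) < p - 1 := by linarith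
  have he : (0:ℝ) < 2 * (p / (p - 1)) := by positivity
  have hlogR₁ : 0 < Real.log R₁ := Real.log_pos hR₁
  have hlog2 : 0 < Real.log 2 := Real.log_pos (by norm_num)
  set A : ℝ := Real.log 2 + Real.log R₁ with hAdef
  have hA : 0 < A := by positivity
  clear_value A
  have h2p : (0:ℝ) < (2:ℝ) ^ p := Real.rpow_pos_of_pos (by norm_num) _
  have hCp : (0:ℝ) < C₀ ^ p := Real.rpow_pos_of_pos hC₀ _
  set c1 : ℝ := (p - 1) * ((2:ℝ) ^ p)⁻¹ * (C₀ ^ p)⁻¹ with hc1def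
  have hc1 : 0 < c1 := by positivity
  clear_value c1
  set c2 : ℝ := A⁻¹ with hc2def
  have hc2 : 0 < c2 := by positivity
  clear_value c2
  set C' : ℝ := (c1 * c2)⁻¹ with hC'def
  have hC' : 0 < C' := by positivity
  clear_value C'
  set lam : ℝ := max (Real.log (3 * A)) 0 with hlamdef
  have hlam : 0 ≤ lam := le_max_right _ _
  have hlam2 : Real.log (3 * A) ≤ lam := le_max_left _ _
  clear_value lam
  refine ⟨C' + lam + 1, by positivity, 1/2, ⟨by norm_num, by norm_num⟩, ?_⟩
  intro δ hδ hδhalf T hT w hwm hwnn hwint hcrit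
  by_contra hcon
  push_neg at hcon
  set C : ℝ := C' + lam + 1 with hCdef
  clear_value C
  set J : ℝ → ℝ := fun R => ∫ q in Pset R, w q.1 q.2 * psi η p R q.1 q.2 with hJdef
  set I : ℝ → ℝ := fun R => ∫ q in Pset R, w q.1 q.2 * psiStar η p R q.1 q.2 with hIdef
  have hexp' : (1 / (p - 1)) / (p / (p - 1)) = 1/p := by
    field_simp
  have hcrit' : ∀ R : ℝ, R₁ ≤ R → R < T →
      δ + J R ≤ C₀ * Real.log R ^ (1/p) * I R ^ (1/p) := by
    intro R h1 h2
    have := hcrit R h1 h2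
    rwa [hexp'] at this
  have hT0 : (0:ℝ) < T := by linarith
  -- measurability of Pset
  have hPmeas : ∀ R : ℝ, MeasurableSet (Pset R) := by
    intro R
    have h1 : MeasurableSet {q : E2 × ℝ | 1 < ‖q.1‖} :=
      measurableSet_lt measurable_const measurable_fst.norm
    have h2 : MeasurableSet {q : E2 × ℝ | 0 ≤ q.2} :=
      measurableSet_le measurable_const measurable_snd
    have h3 : MeasurableSet {q : E2 × ℝ | (‖q.1‖ - 1) ^ 2 + q.2 ≤ R} :=
      measurableSet_le (by fun_prop) measurable_const
    exact h1.inter (h2.inter h3)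
  -- continuity pieces
  have hηcont : ContinuousOn η (Set.Ici 0) := hη.1.continuousOn
  have hrpowc : Continuous (fun x : ℝ => x ^ (2 * (p / (p - 1)))) :=
    Real.continuous_rpow_const he.le
  have hgcont : Continuous (fun q : E2 × ℝ => (‖q.1‖ - 1) ^ 2 + q.2) := by fun_prop
  have hbase : ∀ R : ℝ, 0 < R →
      ContinuousOn (fun q : E2 × ℝ => η (((‖q.1‖ - 1) ^ 2 + q.2) / R))
        {q : E2 × ℝ | 0 ≤ q.2} := by
    intro R hR
    apply hηcont.comp (hgcont.div_const R).continuousOn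
    intro q hq
    simp only [Set.mem_setOf_eq] at hq
    simp only [Set.mem_Ici]
    have := sq_nonneg (‖q.1‖ - 1)
    positivity
  have hpsicont : ∀ R : ℝ, 0 < R →
      ContinuousOn (fun q : E2 × ℝ => psi η p R q.1 q.2) {q : E2 × ℝ | 0 ≤ q.2} := by
    intro R hR
    exact hrpowc.comp_continuousOn (hbase R hR)
  have hsubT : ∀ R : ℝ, Pset R ⊆ {q : E2 × ℝ | 0 ≤ q.2} := fun R q hq => hq.2.1
  have haesm_psi : ∀ R S : ℝ, 0 < R →
      AEStronglyMeasurable (fun q : E2 × ℝ => psi η p R q.1 q.2)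
        (volume.restrict (Pset S)) :=
    fun R S hR => ((hpsicont R hR).mono (hsubT S)).aestronglyMeasurable (hPmeas S)
  have haesm_psiStar : ∀ R S : ℝ, 0 < R →
      AEStronglyMeasurable (fun q : E2 × ℝ => psiStar η p R q.1 q.2)
        (volume.restrict (Pset S)) := by
    intro R S hR
    have hind : (fun q : E2 × ℝ => psiStar η p R q.1 q.2)
        = fun q => (({q : E2 × ℝ | ((‖q.1‖ - 1) ^ 2 + q.2) / R < 1/2}ᶜ).indicator
            (fun q => η (((‖q.1‖ - 1) ^ 2 + q.2) / R)) q) ^ (2 * (p / (p - 1))) := by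
      funext q
      simp only [psiStar, etaStar, Set.indicator_apply, Set.mem_compl_iff, Set.mem_setOf_eq]
      split_ifs with h <;> rfl
    rw [hind]
    apply hrpowc.comp_aestronglyMeasurable
    apply AEStronglyMeasurable.indicator
    · exact (((hbase R hR).mono (hsubT S)).aestronglyMeasurable (hPmeas S))
    · exact (measurableSet_lt (by fun_prop) measurable_const).compl
  -- pointwise facts
  have hσnn : ∀ S : ℝ, ∀ q ∈ Pset S, 0 ≤ (‖q.1‖ - 1) ^ 2 + q.2 :=
    fun S q hq => add_nonneg (sq_nonneg _) hq.2.1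
  have hwnnP : ∀ R : ℝ, R < T → ∀ q ∈ Pset R, 0 ≤ w q.1 q.2 := by
    intro R hR q hq
    exact hwnn q.1 q.2 hq.1 hq.2.1
      (lt_of_le_of_lt ((le_add_of_nonneg_left (sq_nonneg _)).trans hq.2.2) hR)
  have hpsi_nonneg : ∀ R : ℝ, 0 < R → ∀ q : E2 × ℝ, 0 ≤ (‖q.1‖ - 1) ^ 2 + q.2 →
      0 ≤ psi η p R q.1 q.2 := by
    intro R hR q hq
    exact Real.rpow_nonneg (eta_nonneg hη (by positivity)) _
  have hpsi_le_one : ∀ R : ℝ, 0 < R → ∀ q : E2 × ℝ, 0 ≤ (‖q.1‖ - 1) ^ 2 + q.2 →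
      psi η p R q.1 q.2 ≤ 1 := by
    intro R hR q hq
    have h0 : (0:ℝ) ≤ ((‖q.1‖ - 1) ^ 2 + q.2) / R := by positivity
    exact Real.rpow_le_one (eta_nonneg hη h0) (eta_le_one hη h0) he.le
  have hpsiStar_nonneg : ∀ R : ℝ, 0 < R → ∀ q : E2 × ℝ, 0 ≤ (‖q.1‖ - 1) ^ 2 + q.2 →
      0 ≤ psiStar η p R q.1 q.2 := by
    intro R hR q hq
    have h0 : (0:ℝ) ≤ ((‖q.1‖ - 1) ^ 2 + q.2) / R := by positivity
    exact Real.rpow_nonneg (etaStar_nonneg hη h0) _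
  have hpsiStar_le_psi : ∀ R : ℝ, 0 < R → ∀ q : E2 × ℝ, 0 ≤ (‖q.1‖ - 1) ^ 2 + q.2 →
      psiStar η p R q.1 q.2 ≤ psi η p R q.1 q.2 := by
    intro R hR q hq
    have h0 : (0:ℝ) ≤ ((‖q.1‖ - 1) ^ 2 + q.2) / R := by positivity
    exact Real.rpow_le_rpow (etaStar_nonneg hη h0) (etaStar_le_eta hη h0) he.le
  have hpsiStar_le_one : ∀ R : ℝ, 0 < R → ∀ q : E2 × ℝ, 0 ≤ (‖q.1‖ - 1) ^ 2 + q.2 →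
      psiStar η p R q.1 q.2 ≤ 1 := by
    intro R hR q hq
    have h0 : (0:ℝ) ≤ ((‖q.1‖ - 1) ^ 2 + q.2) / R := by positivity
    exact Real.rpow_le_one (etaStar_nonneg hη h0)
      ((etaStar_le_eta hη h0).trans (eta_le_one hη h0)) he.le
  have hpsi_mono : ∀ R R' : ℝ, 0 < R → R ≤ R' → ∀ q : E2 × ℝ,
      0 ≤ (‖q.1‖ - 1) ^ 2 + q.2 → psi η p R q.1 q.2 ≤ psi η p R' q.1 q.2 := by
    intro R R' hR hRR' q hq
    have hR' : 0 < R' := lt_of_lt_of_le hR hRR'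
    have hdiv : ((‖q.1‖ - 1) ^ 2 + q.2) / R' ≤ ((‖q.1‖ - 1) ^ 2 + q.2) / R := by
      rw [div_le_div_iff₀ hR' hR]
      exact mul_le_mul_of_nonneg_left hRR' hq
    have h1 : (0:ℝ) ≤ ((‖q.1‖ - 1) ^ 2 + q.2) / R' := by positivity
    have h2 : (0:ℝ) ≤ ((‖q.1‖ - 1) ^ 2 + q.2) / R := by positivity
    exact Real.rpow_le_rpow (eta_nonneg hη h2) (eta_antitone hη h1 h2 hdiv) he.le
  -- integrability
  have hintb : ∀ R S : ℝ, 0 < R → 0 < S → S < T →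
      IntegrableOn (fun q : E2 × ℝ => w q.1 q.2 * psi η p R q.1 q.2) (Pset S) := by
    intro R S hR hS hST
    apply Integrable.mono' ((hwint S ⟨hS, hST⟩).norm)
      ((hwm.aestronglyMeasurable.restrict).mul (haesm_psi R S hR))
    filter_upwards [self_mem_ae_restrict (hPmeas S)] with q hq
    show ‖w q.1 q.2 * psi η p R q.1 q.2‖ ≤ ‖w q.1 q.2‖
    rw [norm_mul]
    have h1 := hpsi_nonneg R hR q (hσnn S q hq)
    have h2 := hpsi_le_one R hR q (hσnn S q hq)
    calc ‖w q.1 q.2‖ * ‖psi η p R q.1 q.2‖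
        ≤ ‖w q.1 q.2‖ * 1 := by
          apply mul_le_mul_of_nonneg_left _ (norm_nonneg _)
          rw [Real.norm_eq_abs, abs_of_nonneg h1]; exact h2
      _ = ‖w q.1 q.2‖ := mul_one _
  have hintbStar : ∀ R S : ℝ, 0 < R → 0 < S → S < T →
      IntegrableOn (fun q : E2 × ℝ => w q.1 q.2 * psiStar η p R q.1 q.2) (Pset S) := by
    intro R S hR hS hST
    apply Integrable.mono' ((hwint S ⟨hS, hST⟩).norm)
      ((hwm.aestronglyMeasurable.restrict).mul (haesm_psiStar R S hR))
    filter_upwards [self_mem_ae_restrict (hPmeas S)] with q hq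
    show ‖w q.1 q.2 * psiStar η p R q.1 q.2‖ ≤ ‖w q.1 q.2‖
    rw [norm_mul]
    have h1 := hpsiStar_nonneg R hR q (hσnn S q hq)
    have h2 := hpsiStar_le_one R hR q (hσnn S q hq)
    calc ‖w q.1 q.2‖ * ‖psiStar η p R q.1 q.2‖
        ≤ ‖w q.1 q.2‖ * 1 := by
          apply mul_le_mul_of_nonneg_left _ (norm_nonneg _)
          rw [Real.norm_eq_abs, abs_of_nonneg h1]; exact h2
      _ = ‖w q.1 q.2‖ := mul_one _
  -- nonnegativity and comparison of J, I
  have hJnn : ∀ R : ℝ, 0 < R → R < T → 0 ≤ J R := by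
    intro R hR hRT
    apply setIntegral_nonneg (hPmeas R)
    intro q hq
    exact mul_nonneg (hwnnP R hRT q hq) (hpsi_nonneg R hR q (hσnn R q hq))
  have hInn : ∀ R : ℝ, 0 < R → R < T → 0 ≤ I R := by
    intro R hR hRT
    apply setIntegral_nonneg (hPmeas R)
    intro q hq
    exact mul_nonneg (hwnnP R hRT q hq) (hpsiStar_nonneg R hR q (hσnn R q hq))
  have hIleJ : ∀ R : ℝ, 0 < R → R < T → I R ≤ J R := by
    intro R hR hRT
    apply setIntegral_mono_on (hintbStar R R hR hR hRT) (hintb R R hR hR hRT) (hPmeas R)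
    intro q hq
    exact mul_le_mul_of_nonneg_left (hpsiStar_le_psi R hR q (hσnn R q hq))
      (hwnnP R hRT q hq)
  -- core inequality  J R + I (2R) ≤ J (2R)
  have hcore : ∀ R : ℝ, 0 < R → 2*R < T → J R + I (2*R) ≤ J (2*R) := by
    intro R hR h2RT
    have h2R : (0:ℝ) < 2*R := by linarith
    have hRT : R < T := by linarith
    have hsub : Pset R ⊆ Pset (2*R) := fun q hq => ⟨hq.1, hq.2.1, by
      have := hq.2.2; linarith⟩
    have hIa := hintbStar (2*R) (2*R) h2R h2R h2RT
    have hIb : Integrable ((Pset R).indicator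
        (fun q : E2 × ℝ => w q.1 q.2 * psi η p R q.1 q.2))
        (volume.restrict (Pset (2*R))) :=
      ((hintb R R hR hR hRT).integrable_indicator (hPmeas R)).integrableOn
    have hIc := hintb (2*R) (2*R) h2R h2R h2RT
    have hpt : ∀ q ∈ Pset (2*R),
        w q.1 q.2 * psiStar η p (2*R) q.1 q.2 +
          (Pset R).indicator (fun q : E2 × ℝ => w q.1 q.2 * psi η p R q.1 q.2) q
        ≤ w q.1 q.2 * psi η p (2*R) q.1 q.2 := by
      intro q hq
      have hσ0 : 0 ≤ (‖q.1‖ - 1) ^ 2 + q.2 := hσnn (2*R) q hq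
      have hw0 : 0 ≤ w q.1 q.2 := hwnnP (2*R) h2RT q hq
      by_cases hcase : (‖q.1‖ - 1) ^ 2 + q.2 < R
      · have hmem : q ∈ Pset R := ⟨hq.1, hq.2.1, hcase.le⟩
        rw [Set.indicator_of_mem hmem]
        have hstar0 : psiStar η p (2*R) q.1 q.2 = 0 := by
          have hlt : ((‖q.1‖ - 1) ^ 2 + q.2) / (2*R) < 1/2 := by
            rw [div_lt_iff₀ h2R]; linarith
          rw [psiStar, etaStar, if_pos hlt, Real.zero_rpow he.ne']
        rw [hstar0, mul_zero, zero_add]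
        exact mul_le_mul_of_nonneg_left (hpsi_mono R (2*R) hR (by linarith) q hσ0) hw0
      · by_cases hmem : q ∈ Pset R
        · have hσR : (‖q.1‖ - 1) ^ 2 + q.2 = R := le_antisymm hmem.2.2 (not_lt.mp hcase)
          rw [Set.indicator_of_mem hmem]
          have hψR0 : psi η p R q.1 q.2 = 0 := by
            rw [psi, hσR, div_self hR.ne', hη.2.2.2 1 le_rfl, Real.zero_rpow he.ne']
          rw [hψR0, mul_zero, add_zero]
          exact mul_le_mul_of_nonneg_left (hpsiStar_le_psi (2*R) h2R q hσ0) hw0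
        · rw [Set.indicator_of_notMem hmem, add_zero]
          exact mul_le_mul_of_nonneg_left (hpsiStar_le_psi (2*R) h2R q hσ0) hw0
    have h := setIntegral_mono_on (hIa.add hIb) hIc (hPmeas (2*R)) hpt
    have e := integral_add hIa hIb
    rw [setIntegral_indicator (hPmeas R), Set.inter_eq_self_of_subset_right hsub] at e
    have eI : (∫ q in Pset (2*R), w q.1 q.2 * psiStar η p (2*R) q.1 q.2) = I (2*R) := rfl
    have eJ : (∫ q in Pset R, w q.1 q.2 * psi η p R q.1 q.2) = J R := rfl
    have eJ2 : (∫ q in Pset (2*R), w q.1 q.2 * psi η p (2*R) q.1 q.2) = J (2*R) := rfl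
    rw [eI, eJ] at e
    have h' : I (2*R) + J R ≤ J (2*R) :=
      le_trans (le_of_eq e.symm) (le_trans h (le_of_eq eJ2))
    linarith
  clear_value J I
  -- collapsing (x^(1/p))^p = x
  have hcollapse : ∀ x : ℝ, 0 ≤ x → (x ^ (1/p)) ^ p = x := by
    intro x hx
    rw [← Real.rpow_mul hx, one_div_mul_cancel hp0.ne', Real.rpow_one]
  -- cap
  have hcap : ∀ R : ℝ, R₁ ≤ R → R < T → (δ + J R) ^ (p-1) ≤ C₀ ^ p * Real.log R := by
    intro R hRR₁ hRT
    have hR1 : (1:ℝ) < R := lt_of_lt_of_le hR₁ hRR₁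
    have hR0 : (0:ℝ) < R := by linarith
    have hΛ : 0 < Real.log R := Real.log_pos hR1
    have hJR := hJnn R hR0 hRT
    have hz0 : 0 < δ + J R := by linarith
    set z : ℝ := δ + J R with hzdef
    clear_value z
    have hz : 0 < z := hz0
    have h1 : z ≤ C₀ * Real.log R ^ (1/p) * I R ^ (1/p) := by
      have := hcrit' R hRR₁ hRT
      rwa [← hzdef] at this
    have h2 : I R ^ (1/p) ≤ z ^ (1/p) := by
      apply Real.rpow_le_rpow (hInn R hR0 hRT) _ (by positivity)
      have h2a := hIleJ R hR0 hRT
      rw [hzdef]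
      linarith
    have h3 : z ≤ C₀ * Real.log R ^ (1/p) * z ^ (1/p) := by
      calc z ≤ C₀ * Real.log R ^ (1/p) * I R ^ (1/p) := h1
        _ ≤ C₀ * Real.log R ^ (1/p) * z ^ (1/p) := by
            apply mul_le_mul_of_nonneg_left h2
            positivity
    have h4 : z ^ p ≤ C₀ ^ p * Real.log R * z := by
      calc z ^ p ≤ (C₀ * Real.log R ^ (1/p) * z ^ (1/p)) ^ p :=
            Real.rpow_le_rpow hz.le h3 hp0.le
        _ = C₀ ^ p * Real.log R * z := by
            rw [Real.mul_rpow (by positivity) (Real.rpow_nonneg hz.le _),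
              Real.mul_rpow hC₀.le (by positivity), hcollapse _ hΛ.le, hcollapse _ hz.le]
    have hzp : z ^ p = z ^ (p-1) * z := by
      nth_rewrite 1 [show p = (p-1) + 1 by ring]
      rw [Real.rpow_add hz, Real.rpow_one]
    rw [hzp] at h4
    exact le_of_mul_le_mul_right h4 hz
  -- key dyadic step
  have hkeyR : ∀ R : ℝ, R₁ ≤ R → 2*R < T →
      c1 * (Real.log (2*R))⁻¹ ≤ (δ + J R) ^ (1-p) - (δ + J (2*R)) ^ (1-p) := by
    intro R hRR₁ h2RT
    have hR1 : (1:ℝ) < R := lt_of_lt_of_le hR₁ hRR₁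
    have hR0 : (0:ℝ) < R := by linarith
    have h2R : (0:ℝ) < 2*R := by linarith
    have hRT : R < T := by linarith
    have h2RR₁ : R₁ ≤ 2*R := by linarith
    have hΛ : 0 < Real.log R := Real.log_pos hR1
    have hΛ' : 0 < Real.log (2*R) := Real.log_pos (by linarith)
    have hΛΛ' : Real.log R ≤ Real.log (2*R) := by
      apply Real.log_le_log hR0; linarith
    have hJR := hJnn R hR0 hRT
    have hJ2R := hJnn (2*R) h2R h2RT
    have hcoreR := hcore R hR0 h2RT
    have hI2nn := hInn (2*R) h2R h2RT
    have hz0 : 0 < δ + J R := by linarith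
    have hzz0 : δ + J R ≤ δ + J (2*R) := by linarith
    have hI20 : I (2*R) ≤ (δ + J (2*R)) - (δ + J R) := by linarith
    set z : ℝ := δ + J R with hzdef
    set z' : ℝ := δ + J (2*R) with hz'def
    clear_value z z'
    have hz : 0 < z := hz0
    have hzz' : z ≤ z' := hzz0
    have hz'0 : 0 < z' := lt_of_lt_of_le hz hzz'
    have h1 : z' ≤ C₀ * Real.log (2*R) ^ (1/p) * I (2*R) ^ (1/p) := by
      have := hcrit' (2*R) h2RR₁ h2RT
      rwa [← hz'def] at this
    have h4 : z' ^ p ≤ C₀ ^ p * Real.log (2*R) * I (2*R) := by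
      calc z' ^ p ≤ (C₀ * Real.log (2*R) ^ (1/p) * I (2*R) ^ (1/p)) ^ p :=
            Real.rpow_le_rpow hz'0.le h1 hp0.le
        _ = C₀ ^ p * Real.log (2*R) * I (2*R) := by
            rw [Real.mul_rpow (by positivity) (Real.rpow_nonneg hI2nn _),
              Real.mul_rpow hC₀.le (by positivity), hcollapse _ hΛ'.le, hcollapse _ hI2nn]
    have h5 : z ^ p ≤ C₀ ^ p * Real.log (2*R) * (z' - z) := by
      have hzp' : z ^ p ≤ z' ^ p := Real.rpow_le_rpow hz.le hzz' hp0.le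
      have hI2 : I (2*R) ≤ z' - z := hI20
      calc z ^ p ≤ z' ^ p := hzp'
        _ ≤ C₀ ^ p * Real.log (2*R) * I (2*R) := h4
        _ ≤ C₀ ^ p * Real.log (2*R) * (z' - z) := by
            apply mul_le_mul_of_nonneg_left hI2; positivity
    set K : ℝ := C₀ ^ p * Real.log (2*R) with hKdef
    have hK : 0 < K := by positivity
    set qq : ℝ := z ^ (p-1) * K⁻¹ with hqqdef
    have hzpm1 : (0:ℝ) < z ^ (p-1) := Real.rpow_pos_of_pos hz _
    have hqq0 : 0 ≤ qq := by
      rw [hqqdef]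
      exact mul_nonneg hzpm1.le (inv_nonneg.mpr hK.le)
    have hqq1 : qq ≤ 1 := by
      have hc := hcap R hRR₁ hRT
      rw [← hzdef] at hc
      have hle : z ^ (p-1) ≤ K := by
        calc z ^ (p-1) ≤ C₀ ^ p * Real.log R := hc
          _ ≤ K := by
              rw [hKdef]
              apply mul_le_mul_of_nonneg_left hΛΛ'
              positivity
      rw [hqqdef, ← div_eq_mul_inv, div_le_one hK]
      exact hle
    have hzp : z ^ p = z * z ^ (p-1) := by
      nth_rewrite 1 [show p = 1 + (p-1) by ring]
      rw [Real.rpow_add hz, Real.rpow_one]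
    have hζz' : z * (1 + qq) ≤ z' := by
      have h6 : z ^ p * K⁻¹ ≤ z' - z := by
        rw [← div_eq_mul_inv, div_le_iff₀' hK]
        exact h5
      have h7 : z * (1 + qq) = z + z ^ p * K⁻¹ := by
        rw [hzp, hqqdef]; ring
      linarith
    set ζ : ℝ := z * (1 + qq) with hζdef
    have hzζ : z ≤ ζ := by
      rw [hζdef]
      exact le_mul_of_one_le_right hz.le (by linarith)
    have hζ2z : ζ ≤ 2*z := by
      rw [hζdef, mul_comm (2:ℝ) z]
      exact mul_le_mul_of_nonneg_left (by linarith) hz.le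
    have hζ0 : 0 < ζ := lt_of_lt_of_le hz hzζ
    have hki := key_ineq (p-1) z ζ hp1 hz hzζ
    have h7 : z' ^ (-(p-1)) ≤ ζ ^ (-(p-1)) :=
      Real.rpow_le_rpow_of_nonpos hζ0 hζz' (by linarith)
    have h8 : ζ ^ (-(p-1) - 1) = ζ ^ (-p) := by
      rw [show -(p-1) - 1 = -p by ring]
    have h9 : (2*z) ^ (-p) ≤ ζ ^ (-p) :=
      Real.rpow_le_rpow_of_nonpos hζ0 hζ2z (by linarith)
    have h10 : (2*z) ^ (-p) = ((2:ℝ) ^ p)⁻¹ * z ^ (-p) := by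
      rw [Real.mul_rpow (by norm_num) hz.le, Real.rpow_neg (by norm_num)]
    have h11 : z * z ^ (-p) = z ^ (1-p) := by
      rw [show (1:ℝ)-p = 1 + (-p) by ring, Real.rpow_add hz, Real.rpow_one]
    have h12 : z ^ (p-1) * z ^ (1-p) = 1 := by
      rw [← Real.rpow_add hz]
      norm_num
    have e1 : qq * z ^ (1-p) = K⁻¹ := by
      calc qq * z ^ (1-p) = (z ^ (p-1) * z ^ (1-p)) * K⁻¹ := by rw [hqqdef]; ring
        _ = K⁻¹ := by rw [h12, one_mul]
    have hA1 : (p-1) * (z*qq) * ((2*z) ^ (-p)) = c1 * (Real.log (2*R))⁻¹ := by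
      calc (p-1) * (z*qq) * ((2*z) ^ (-p))
          = (p-1) * ((2:ℝ)^p)⁻¹ * (qq * (z * z ^ (-p))) := by rw [h10]; ring
        _ = (p-1) * ((2:ℝ)^p)⁻¹ * (qq * z ^ (1-p)) := by rw [h11]
        _ = (p-1) * ((2:ℝ)^p)⁻¹ * K⁻¹ := by rw [e1]
        _ = c1 * (Real.log (2*R))⁻¹ := by
            rw [hc1def, hKdef, mul_inv]; ring
    have h13 : c1 * (Real.log (2*R))⁻¹ ≤ (p-1) * (ζ - z) * ζ ^ (-(p-1) - 1) := by
      rw [h8, show ζ - z = z * qq from by rw [hζdef]; ring, ← hA1]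
      apply mul_le_mul_of_nonneg_left h9
      positivity
    have hfin : c1 * (Real.log (2*R))⁻¹ ≤ z ^ (-(p-1)) - z' ^ (-(p-1)) := by
      calc c1 * (Real.log (2*R))⁻¹ ≤ (p-1) * (ζ - z) * ζ ^ (-(p-1) - 1) := h13
        _ ≤ z ^ (-(p-1)) - ζ ^ (-(p-1)) := hki
        _ ≤ z ^ (-(p-1)) - z' ^ (-(p-1)) := by linarith
    rw [show -(p-1) = 1-p by ring] at hfin
    exact hfin
  -- dyadic endgame
  have hRk : ∀ k : ℕ, R₁ ≤ 2^k * R₁ := by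
    intro k
    have h1 : (1:ℝ) ≤ 2^k := one_le_pow₀ (by norm_num)
    exact le_mul_of_one_le_left (by linarith) h1
  have hRkpos : ∀ k : ℕ, (0:ℝ) < 2^k * R₁ := by
    intro k
    have := hRk k
    linarith
  set D : ℝ := δ ^ (-(p-1)) with hDdef
  have hD1 : 1 ≤ D :=
    Real.one_le_rpow_of_pos_of_le_one_of_nonpos hδ (by linarith) (by linarith)
  have hD0 : 0 < D := by linarith
  clear_value D
  set N : ℕ := ⌈Real.exp (C' * D)⌉₊ with hNdef
  have hE1 : 1 ≤ Real.exp (C' * D) := Real.one_le_exp (by positivity)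
  have hNlb : Real.exp (C' * D) ≤ (N:ℝ) := Nat.le_ceil _
  have hNub : (N:ℝ) < Real.exp (C' * D) + 1 := Nat.ceil_lt_add_one (by positivity)
  clear_value N
  have hNT : (2:ℝ)^N * R₁ < T := by
    have hlogT : Real.exp (C * D) < Real.log T := by
      calc Real.exp (C*D) = Real.log (Real.exp (Real.exp (C*D))) := (Real.log_exp _).symm
        _ < Real.log T := Real.log_lt_log (Real.exp_pos _) hcon
    have hlogN : Real.log ((2:ℝ)^N * R₁) = (N:ℝ) * Real.log 2 + Real.log R₁ := by
      rw [Real.log_mul (by positivity) (by positivity), Real.log_pow]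
    have hb1 : (N:ℝ) * Real.log 2 + Real.log R₁ ≤ ((N:ℝ)+1) * A := by
      rw [hAdef]
      linarith [mul_nonneg (Nat.cast_nonneg N : (0:ℝ) ≤ (N:ℝ)) hlogR₁.le]
    have hb2 : ((N:ℝ)+1) * A ≤ Real.exp (C' * D) * (3*A) := by
      have h3E : (N:ℝ)+1 ≤ 3 * Real.exp (C' * D) := by linarith
      calc ((N:ℝ)+1) * A ≤ (3 * Real.exp (C' * D)) * A :=
            mul_le_mul_of_nonneg_right h3E hA.le
        _ = Real.exp (C' * D) * (3*A) := by ring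
    have hb3 : Real.exp (C'*D) * (3*A) ≤ Real.exp (C'*D + lam) := by
      rw [Real.exp_add]
      apply mul_le_mul_of_nonneg_left _ (Real.exp_pos _).le
      calc (3*A : ℝ) = Real.exp (Real.log (3*A)) := (Real.exp_log (by positivity)).symm
        _ ≤ Real.exp lam := Real.exp_le_exp.mpr hlam2
    have hb4 : C'*D + lam < C * D := by
      rw [hCdef]
      linarith [mul_nonneg hlam (show (0:ℝ) ≤ D - 1 by linarith), hD0]
    have hmain : Real.log ((2:ℝ)^N * R₁) < Real.log T := by
      rw [hlogN]
      calc (N:ℝ)*Real.log 2 + Real.log R₁ ≤ Real.exp (C'*D + lam) := by linarith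
        _ < Real.exp (C*D) := Real.exp_lt_exp.mpr hb4
        _ < Real.log T := hlogT
    calc (2:ℝ)^N * R₁ = Real.exp (Real.log ((2:ℝ)^N*R₁)) := (Real.exp_log (hRkpos N)).symm
      _ < Real.exp (Real.log T) := Real.exp_lt_exp.mpr hmain
      _ = T := Real.exp_log hT0
  -- telescoping
  have htel : ∀ n : ℕ, (2:ℝ)^n * R₁ < T →
      c1 * ∑ k ∈ Finset.range n, (Real.log ((2:ℝ)^(k+1) * R₁))⁻¹
        ≤ (δ + J ((2:ℝ)^0 * R₁)) ^ (1-p) - (δ + J ((2:ℝ)^n * R₁)) ^ (1-p) := by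
    intro n
    induction n with
    | zero => intro _; simp
    | succ m ih =>
      intro hsT
      have hpowpos : (0:ℝ) < 2^m := pow_pos (by norm_num) m
      have hmono : (2:ℝ)^m * R₁ < (2:ℝ)^(m+1) * R₁ := by
        have h1 : (2:ℝ)^m < 2^(m+1) := by
          rw [pow_succ]; linarith
        linarith [mul_pos (sub_pos.mpr h1) (show (0:ℝ) < R₁ by linarith)]
      have hmT : (2:ℝ)^m * R₁ < T := lt_trans hmono hsT
      have h2eq : 2 * ((2:ℝ)^m * R₁) = (2:ℝ)^(m+1) * R₁ := by ring
      have hk := hkeyR ((2:ℝ)^m * R₁) (hRk m) (by rw [h2eq]; exact hsT)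
      rw [h2eq] at hk
      have ihm := ih hmT
      rw [Finset.sum_range_succ, mul_add]
      linarith
  have htelN := htel N hNT
  -- harmonic sum bound
  have hsum1 : c2 * Real.log ((N:ℝ)+1)
      ≤ ∑ k ∈ Finset.range N, (Real.log ((2:ℝ)^(k+1) * R₁))⁻¹ := by
    have hterm : ∀ k ∈ Finset.range N,
        c2 * (1/((k:ℝ)+1)) ≤ (Real.log ((2:ℝ)^(k+1) * R₁))⁻¹ := by
      intro k _
      have hlogk : Real.log ((2:ℝ)^(k+1) * R₁) = ((k:ℝ)+1) * Real.log 2 + Real.log R₁ := by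
        rw [Real.log_mul (by positivity) (by positivity), Real.log_pow]
        push_cast; ring
      have hpos : 0 < Real.log ((2:ℝ)^(k+1) * R₁) := by
        rw [hlogk]; positivity
      have hle : Real.log ((2:ℝ)^(k+1) * R₁) ≤ ((k:ℝ)+1) * A := by
        rw [hlogk, hAdef]
        linarith [mul_nonneg (Nat.cast_nonneg k : (0:ℝ) ≤ (k:ℝ)) hlogR₁.le]
      have hinv := inv_anti₀ hpos hle
      calc c2 * (1/((k:ℝ)+1)) = (((k:ℝ)+1) * A)⁻¹ := by
            rw [mul_inv, hc2def, one_div]; ring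
        _ ≤ (Real.log ((2:ℝ)^(k+1) * R₁))⁻¹ := hinv
    calc c2 * Real.log ((N:ℝ)+1)
        ≤ c2 * ∑ k ∈ Finset.range N, (1/((k:ℝ)+1)) :=
          mul_le_mul_of_nonneg_left (harmonic_lower N) hc2.le
      _ = ∑ k ∈ Finset.range N, c2 * (1/((k:ℝ)+1)) := by rw [Finset.mul_sum]
      _ ≤ ∑ k ∈ Finset.range N, (Real.log ((2:ℝ)^(k+1) * R₁))⁻¹ :=
          Finset.sum_le_sum hterm
  -- final contradiction
  have h20R : (2:ℝ)^(0:ℕ) * R₁ < T := by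
    norm_num
    linarith
  have hJ0nn : 0 ≤ J ((2:ℝ)^(0:ℕ) * R₁) := hJnn _ (hRkpos 0) h20R
  have hu0 : (δ + J ((2:ℝ)^(0:ℕ) * R₁)) ^ (1-p) ≤ D := by
    have h1 : δ ≤ δ + J ((2:ℝ)^(0:ℕ) * R₁) := by linarith
    have h2 := Real.rpow_le_rpow_of_nonpos hδ h1 (show (1:ℝ)-p ≤ 0 by linarith)
    rw [hDdef, show -(p-1) = 1-p by ring]
    exact h2
  have huN : 0 < (δ + J ((2:ℝ)^N * R₁)) ^ (1-p) := by
    have := hJnn _ (hRkpos N) hNT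
    apply Real.rpow_pos_of_pos
    linarith
  have hlogN1 : C' * D ≤ Real.log ((N:ℝ)+1) := by
    calc C' * D = Real.log (Real.exp (C' * D)) := (Real.log_exp _).symm
      _ ≤ Real.log ((N:ℝ)+1) := by
          apply Real.log_le_log (Real.exp_pos _)
          linarith
  have hfinal : D ≤ c1 * (c2 * Real.log ((N:ℝ)+1)) := by
    have h1 : c1 * (c2 * (C' * D)) = D := by
      rw [hC'def, mul_inv]
      field_simp
    calc D = c1 * (c2 * (C' * D)) := h1.symm
      _ ≤ c1 * (c2 * Real.log ((N:ℝ)+1)) := by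
          apply mul_le_mul_of_nonneg_left _ hc1.le
          exact mul_le_mul_of_nonneg_left hlogN1 hc2.le
  have hcontra : c1 * (c2 * Real.log ((N:ℝ)+1)) < D := by
    calc c1 * (c2 * Real.log ((N:ℝ)+1))
        ≤ c1 * ∑ k ∈ Finset.range N, (Real.log ((2:ℝ)^(k+1) * R₁))⁻¹ :=
          mul_le_mul_of_nonneg_left hsum1 hc1.le
      _ ≤ (δ + J ((2:ℝ)^(0:ℕ) * R₁)) ^ (1-p) - (δ + J ((2:ℝ)^N * R₁)) ^ (1-p) := htelN
      _ < (δ + J ((2:ℝ)^(0:ℕ) * R₁)) ^ (1-p) := by linarith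
      _ ≤ D := hu0
  linarith
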